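/- Let κ > 0 and ω_c ∈ ℝ, and let ξ : ℝ → ℂ be integrable. Define the output pulse shape η : ℝ → ℂ by η(t) = ξ(t) - κ ∫_{-∞}^t e^{-(iω_c + κ/2)(t-r)} ξ(r) dr. Then η is integrable and its Fourier transform satisfies η̂(ω) = ((i(ω + ω_c) - κ/2) / (i(ω + ω_c) + κ/2)) · ξ̂(ω) for every real ω. -/

import Mathlib

open MeasureTheory Set Filter

lemma integrableOn_cexp_aux (a : ℂ) (ha : 0 < a.re) :
    IntegrableOn (fun s : ℝ => Complex.exp (-a * s)) (Ioi (0:ℝ)) := by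
  apply Integrable.mono' (g := fun s : ℝ => Real.exp (-a.re * s))
    (exp_neg_integrableOn_Ioi 0 ha)
  · exact (Complex.continuous_exp.comp (by continuity)).aestronglyMeasurable
  · filter_upwards with s
    rw [Complex.norm_exp]
    simp [Complex.mul_re]

lemma tendsto_cexp_aux (a : ℂ) (ha : 0 < a.re) :
    Tendsto (fun s : ℝ => Complex.exp (-a * s)) atTop (nhds 0) := by
  rw [tendsto_zero_iff_norm_tendsto_zero]
  have h1 : Tendsto (fun s : ℝ => Real.exp (-a.re * s)) atTop (nhds 0) :=
    Real.tendsto_exp_atBot.comp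
      (tendsto_id.const_mul_atTop_of_neg (by linarith : -a.re < 0))
  apply h1.congr
  intro s
  rw [Complex.norm_exp]
  simp [Complex.mul_re]

lemma integral_cexp_aux (a : ℂ) (ha : 0 < a.re) :
    ∫ s in Ioi (0:ℝ), Complex.exp (-a * s) = 1 / a := by
  have ha0 : a ≠ 0 := fun h => by simp [h] at ha
  have hderiv : ∀ s ∈ Ici (0:ℝ),
      HasDerivAt (fun s : ℝ => -(Complex.exp (-a * s) / a)) (Complex.exp (-a * s)) s := by
    intro s _
    have h1 : HasDerivAt (fun s : ℝ => -a * (s : ℂ)) (-a) s := by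
      simpa using (Complex.ofRealCLM.hasDerivAt (x := s)).const_mul (-a)
    have h3 := ((h1.cexp).div_const a).neg
    have h4 : -(Complex.exp (-a * s) * -a / a) = Complex.exp (-a * s) := by
      rw [mul_neg, neg_div, neg_neg, mul_div_assoc, div_self ha0, mul_one]
    rw [h4] at h3; exact h3
  have htend : Tendsto (fun s : ℝ => -(Complex.exp (-a * s) / a)) atTop (nhds 0) := by
    have := ((tendsto_cexp_aux a ha).div_const a).neg
    simpa using this
  rw [integral_Ioi_of_hasDerivAt_of_tendsto' hderiv (integrableOn_cexp_aux a ha) htend]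
  simp

/-- Response of an optical cavity (detuning `ω_c`, half linewidth `κ > 0`) to an integrable
input pulse shape `ξ`: the output pulse shape
`η(t) = ξ(t) - κ ∫_{-∞}^t e^{-(iω_c + κ/2)(t-r)} ξ(r) dr` is integrable and its Fourier
transform (convention `(2π)^{-1/2} ∫ e^{-iωt}·dt`) satisfies
`η̂(ω) = ((i(ω+ω_c) - κ/2)/(i(ω+ω_c) + κ/2)) ξ̂(ω)`. -/
theorem cavity_output_pulse_fourier (κ ωc : ℝ) (hκ : 0 < κ) (ξ : ℝ → ℂ)
    (hξ : Integrable ξ) (η : ℝ → ℂ)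
    (hη : ∀ t : ℝ, η t = ξ t - (κ : ℂ) * ∫ r in Iic t,
        Complex.exp (-(Complex.I * ωc + (κ : ℂ)/2) * ((t : ℂ) - r)) * ξ r) :
    Integrable η ∧
    ∀ ω : ℝ,
      (1 / (Real.sqrt (2 * Real.pi)) : ℂ) * ∫ t : ℝ, Complex.exp (-(Complex.I * ω * t)) * η t
        = ((Complex.I * ((ω : ℂ) + ωc) - (κ : ℂ)/2) / (Complex.I * ((ω : ℂ) + ωc) + (κ : ℂ)/2)) *
          ((1 / (Real.sqrt (2 * Real.pi)) : ℂ) *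
            ∫ t : ℝ, Complex.exp (-(Complex.I * ω * t)) * ξ t) := by
  set c : ℂ := Complex.I * ωc + (κ : ℂ)/2 with hc
  have hcre : c.re = κ / 2 := by
    rw [hc]; simp [Complex.mul_re, Complex.div_re]
  have hcre' : 0 < c.re := by rw [hcre]; linarith
  set g : ℝ → ℂ := (Ioi (0:ℝ)).indicator (fun s => Complex.exp (-c * s)) with hgdef
  have hg : Integrable g := by
    rw [hgdef, integrable_indicator_iff measurableSet_Ioi]
    exact integrableOn_cexp_aux c hcre'
  have hconv_eq : ∀ t : ℝ,
      (∫ r in Iic t, Complex.exp (-c * ((t : ℂ) - r)) * ξ r) = ∫ r, ξ r * g (t - r) := by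
    intro t
    rw [integral_Iic_eq_integral_Iio, ← integral_indicator measurableSet_Iio]
    apply integral_congr_ae
    filter_upwards with r
    by_cases h : r < t
    · have h2 : (0:ℝ) < t - r := by linarith
      simp only [Set.indicator_of_mem (Set.mem_Iio.mpr h), hgdef,
        Set.indicator_of_mem (Set.mem_Ioi.mpr h2)]
      rw [mul_comm]
      norm_cast
    · have h2 : ¬ ((0:ℝ) < t - r) := by linarith
      simp only [Set.indicator_of_notMem (fun hh => h (Set.mem_Iio.mp hh)), hgdef,
        Set.indicator_of_notMem (fun hh => h2 (Set.mem_Ioi.mp hh)), mul_zero]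
  set conv : ℝ → ℂ := fun t => ∫ r, ξ r * g (t - r) with hconvdef
  have hη' : ∀ t, η t = ξ t - κ * conv t := by
    intro t; rw [hη t, hconv_eq t]
  have hprod : Integrable (fun p : ℝ × ℝ => ξ p.2 * g (p.1 - p.2))
      (volume.prod volume) := by
    have := hξ.convolution_integrand (ContinuousLinearMap.mul ℂ ℂ) hg
    simpa using this
  have hconv_int : Integrable conv := hprod.integral_prod_left
  refine ⟨?_, ?_⟩
  · have h1 : Integrable (fun t => ξ t - κ * conv t) := hξ.sub (hconv_int.const_mul κ)
    exact h1.congr (Filter.Eventually.of_forall fun t => (hη' t).symm)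
  · intro ω
    set e : ℝ → ℂ := fun t : ℝ => Complex.exp (-(Complex.I * ω * t)) with hedef
    have henorm : ∀ t, ‖e t‖ = 1 := by
      intro t
      rw [hedef, Complex.norm_exp]
      simp [Complex.mul_re, Complex.mul_im]
    have hemeas : Continuous e := by
      rw [hedef]; exact Complex.continuous_exp.comp (by continuity)
    have hint1 : Integrable (fun t => e t * ξ t) :=
      hξ.bdd_mul hemeas.aestronglyMeasurable (Filter.Eventually.of_forall fun t => le_of_eq (henorm t))
    have hint2 : Integrable (fun t => e t * conv t) :=
      hconv_int.bdd_mul hemeas.aestronglyMeasurable (Filter.Eventually.of_forall fun t => le_of_eq (henorm t))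
    have hdre : (Complex.I * ω + c).re = κ / 2 := by
      simp [Complex.add_re, Complex.mul_re, hcre]
    have hdre' : 0 < (Complex.I * ω + c).re := by rw [hdre]; linarith
    have hd : Complex.I * ω + c ≠ 0 := by
      intro h; rw [h] at hdre; simp at hdre; linarith
    have hginner : ∫ s : ℝ, e s * g s = 1 / (Complex.I * ω + c) := by
      rw [← integral_cexp_aux (Complex.I * ω + c) hdre']
      have : ∀ s : ℝ, e s * g s
          = (Ioi (0:ℝ)).indicator (fun s : ℝ => Complex.exp (-(Complex.I * ω + c) * s)) s := by
        intro s
        by_cases h : (0:ℝ) < s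
        · simp only [hgdef, Set.indicator_of_mem (Set.mem_Ioi.mpr h), hedef]
          rw [← Complex.exp_add]; ring_nf
        · simp only [hgdef, Set.indicator_of_notMem (fun hh => h (Set.mem_Ioi.mp hh)), mul_zero]
      simp_rw [this]
      rw [integral_indicator measurableSet_Ioi]
    have key : ∫ t, e t * conv t = (1 / (Complex.I * ω + c)) * ∫ t, e t * ξ t := by
      have hF : Integrable (fun p : ℝ × ℝ => e p.1 * (ξ p.2 * g (p.1 - p.2)))
          (volume.prod volume) := by
        apply hprod.bdd_mul
        · exact (hemeas.comp continuous_fst).aestronglyMeasurable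
        · exact Filter.Eventually.of_forall fun p => le_of_eq (henorm p.1)
      calc ∫ t, e t * conv t = ∫ t, ∫ r, e t * (ξ r * g (t - r)) := by
            simp_rw [hconvdef, integral_const_mul]
        _ = ∫ r, ∫ t, e t * (ξ r * g (t - r)) := integral_integral_swap hF
        _ = ∫ r, ξ r * (e r * (1 / (Complex.I * ω + c))) := by
            apply integral_congr_ae
            filter_upwards with r
            have step1 : ∫ t, e t * (ξ r * g (t - r)) = ξ r * ∫ t, e t * g (t - r) := by
              rw [← integral_const_mul]
              apply integral_congr_ae; filter_upwards with t; ring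
            have step2 : ∫ t, e t * g (t - r) = ∫ s, e (s + r) * g s := by
              rw [← integral_sub_right_eq_self (fun u : ℝ => e (u + r) * g u) r]
              apply integral_congr_ae; filter_upwards with t
              rw [sub_add_cancel]
            have step3 : ∀ s : ℝ, e (s + r) * g s = e r * (e s * g s) := by
              intro s
              simp only [hedef]
              rw [← mul_assoc, ← Complex.exp_add]
              congr 1
              push_cast
              ring_nf
            rw [step1, step2]
            simp_rw [step3]
            rw [integral_const_mul, hginner]
        _ = (1 / (Complex.I * ω + c)) * ∫ t, e t * ξ t := by
            rw [← integral_const_mul]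
            apply integral_congr_ae; filter_upwards with r; ring
    have hsplit : ∫ t, e t * η t = (∫ t, e t * ξ t) - κ * ∫ t, e t * conv t := by
      have heq : ∀ t, e t * η t = e t * ξ t - κ * (e t * conv t) := by
        intro t; rw [hη' t]; ring
      simp_rw [heq]
      rw [integral_sub hint1 (hint2.const_mul _), integral_const_mul]
    have hc2 : Complex.I * ((ω : ℂ) + ωc) + (κ : ℂ)/2 = Complex.I * ω + c := by
      rw [hc]; ring
    have hc3 : Complex.I * ((ω : ℂ) + ωc) - (κ : ℂ)/2 = Complex.I * ω + c - κ := by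
      rw [hc]; ring
    show (1 / (Real.sqrt (2 * Real.pi)) : ℂ) * ∫ t : ℝ, e t * η t = _
    rw [hsplit, key, hc2, hc3]
    field_simp
    ring
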